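/- Let p > 2 be a prime and f ≥ 1 an integer. Let t_0, ..., t_{f−1} be integers with −p ≤ t_s ≤ p for all s, and suppose Σ_{s=0}^{f−1} p^{f−1−s} t_s ≡ 0 (mod p^f − 1). Then one of the following holds: (1) there is ε ∈ {1, −1} such that t_s = ε(p−1) for every s; or (2) there is a partition of the cyclic index set ℤ/fℤ into nonempty cyclic intervals (sets of the form {a, a+1, ..., a+ℓ−1} taken mod f) such that on each interval of the partition either t is identically 0, or the interval has length ℓ ≥ 2 and there is ε ∈ {1, −1} with t_a = −ε, t_{a+ℓ−1} = ε·p, and t_{a+m} = ε(p−1) for all 0 < m < ℓ−1 (the case ℓ = 2, with no (p−1)-entries, being allowed). -/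

import Mathlib

open Finset

/-- One block of the partition: either all zeros, or `(-ε, ε(p-1), …, ε(p-1), εp)`. -/
def BlockOK (p : ℕ) {f : ℕ} (t : ZMod f → ℤ) (b : ZMod f) (l : ℕ) : Prop :=
  (∀ j : ℕ, j < l → t (b + (j : ZMod f)) = 0) ∨
  (2 ≤ l ∧ ∃ ε : ℤ, (ε = 1 ∨ ε = -1) ∧ t b = -ε ∧
    t (b + ((l - 1 : ℕ) : ZMod f)) = ε * p ∧
    (∀ j : ℕ, 0 < j → j < l - 1 → t (b + (j : ZMod f)) = ε * ((p : ℤ) - 1)))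

/-- A list of block lengths, laid out consecutively starting at `b`, all blocks OK. -/
def GoodList (p : ℕ) {f : ℕ} (t : ZMod f → ℤ) : ZMod f → List ℕ → Prop
  | _, [] => True
  | b, l :: L => 1 ≤ l ∧ BlockOK p t b l ∧ GoodList p t (b + (l : ZMod f)) L

lemma cast_step {f : ℕ} (b : ZMod f) (i : ℕ) :
    b + (i : ZMod f) + 1 = b + ((i + 1 : ℕ) : ZMod f) := by
  push_cast; ring

lemma buildList (p : ℕ) {f : ℕ} (t σ : ZMod f → ℤ)
    (hσrange : ∀ a, σ a = 0 ∨ σ a = 1 ∨ σ a = -1)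
    (hnj : ∀ a, σ a ≠ 0 → σ (a + 1) = 0 ∨ σ (a + 1) = σ a)
    (ht : ∀ a, t a = (p : ℤ) * σ a - σ (a + 1)) :
    ∀ k : ℕ, ∀ b : ZMod f, σ b = 0 → σ (b + (k : ZMod f)) = 0 →
      ∃ L : List ℕ, L.sum = k ∧ GoodList p t b L := by
  intro k
  induction k using Nat.strong_induction_on with
  | _ k IH =>
    intro b hb hbk
    rcases Nat.eq_zero_or_pos k with rfl | hk
    · exact ⟨[], rfl, trivial⟩
    have ecast : ((k : ℕ) : ZMod f) = ((k - 1 : ℕ) : ZMod f) + 1 := by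
      conv_lhs => rw [show k = (k - 1) + 1 from by omega]
      push_cast
      ring
    by_cases h1 : σ (b + 1) = 0
    · obtain ⟨L, hLsum, hLgood⟩ := IH (k - 1) (by omega) (b + 1) h1 (by
        rw [show b + 1 + ((k - 1 : ℕ) : ZMod f) = b + ((k : ℕ) : ZMod f) from by
          rw [ecast]; ring]
        exact hbk)
      refine ⟨1 :: L, by simp [hLsum]; omega, ⟨le_refl 1, ?_, by simpa using hLgood⟩⟩
      left
      intro j hj
      interval_cases j
      rw [show ((0 : ℕ) : ZMod f) = 0 from by norm_num, add_zero, ht b, hb, h1]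
      ring
    · have hεpm : σ (b + 1) = 1 ∨ σ (b + 1) = -1 := (hσrange (b + 1)).resolve_left h1
      have hQ : ∃ m : ℕ, 1 ≤ m ∧ σ (b + ((m : ℕ) : ZMod f)) ≠ σ (b + 1) := by
        refine ⟨k, hk, ?_⟩
        rw [hbk]
        intro h; exact h1 h.symm
      set m := Nat.find hQ with hm
      obtain ⟨hm1, hspec⟩ := Nat.find_spec hQ
      rw [← hm] at hm1 hspec
      have hmk : m ≤ k := Nat.find_le ⟨hk, by rw [hbk]; intro h; exact h1 h.symm⟩
      have hrun : ∀ j, 1 ≤ j → j < m → σ (b + (j : ZMod f)) = σ (b + 1) := by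
        intro j hj1 hjm
        by_contra hne
        exact Nat.find_min hQ hjm ⟨hj1, hne⟩
      have hm2 : 2 ≤ m := by
        rcases Nat.lt_or_ge m 2 with h | h
        · exfalso
          apply hspec
          rw [show m = 1 from by omega, Nat.cast_one]
        · exact h
      have hσm : σ (b + (m : ZMod f)) = 0 := by
        have hprev : σ (b + ((m - 1 : ℕ) : ZMod f)) = σ (b + 1) :=
          hrun (m - 1) (by omega) (by omega)
        have hne : σ (b + ((m - 1 : ℕ) : ZMod f)) ≠ 0 := by
          rw [hprev]; rcases hεpm with h | h <;> rw [h] <;> norm_num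
        have := hnj _ hne
        rw [cast_step b (m - 1), show m - 1 + 1 = m from by omega, hprev] at this
        rcases this with h | h
        · exact h
        · exact absurd h hspec
      obtain ⟨L, hLsum, hLgood⟩ := IH (k - m) (by omega) (b + (m : ZMod f)) hσm (by
        rw [add_assoc, ← Nat.cast_add, show m + (k - m) = k from by omega]
        exact hbk)
      refine ⟨m :: L, by simp [hLsum]; omega, ⟨by omega, ?_, hLgood⟩⟩
      right
      refine ⟨hm2, σ (b + 1), hεpm, ?_, ?_, ?_⟩
      · rw [ht b, hb]; ring
      · rw [ht, cast_step b (m - 1), show m - 1 + 1 = m from by omega,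
          hrun (m - 1) (by omega) (by omega), hσm]
        ring
      · intro j hj0 hj1
        rw [ht, cast_step b j, hrun j (by omega) (by omega),
          hrun (j + 1) (by omega) (by omega)]
        ring

lemma goodList_get (p : ℕ) {f : ℕ} (t : ZMod f → ℤ) :
    ∀ (L : List ℕ) (b : ZMod f), GoodList p t b L →
      (∀ x ∈ L, 1 ≤ x) ∧
      ∀ i (h : i < L.length),
        BlockOK p t (b + (((L.take i).sum : ℕ) : ZMod f)) L[i] := by
  intro L
  induction L with
  | nil =>
    intro b _
    exact ⟨by simp, fun i h => absurd h (by simp)⟩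
  | cons l L ih =>
    intro b hg
    obtain ⟨h1, hB, hG⟩ := hg
    obtain ⟨ihall, ihget⟩ := ih (b + (l : ZMod f)) hG
    constructor
    · intro x hx
      rcases List.mem_cons.mp hx with rfl | hx
      · exact h1
      · exact ihall x hx
    · intro i h
      cases i with
      | zero => simpa using hB
      | succ i =>
        have := ihget i (by simpa using h)
        have hcast : b + (l : ZMod f) + (((L.take i).sum : ℕ) : ZMod f)
            = b + ((((l :: L).take (i + 1)).sum : ℕ) : ZMod f) := by
          simp only [List.take_succ_cons, List.sum_cons]
          push_cast
          ring
        rw [hcast] at this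
        simpa using this

/-- Lemma 7.1 of Gee–Liu–Savitt, Lemma `solution` of the paper.
If `t : ℤ/fℤ → ℤ` takes values in `[-p, p]` and `Σ p^{f−1−s} t_s ≡ 0 (mod p^f − 1)`,
then either `t` is constantly `±(p−1)`, or the cyclic index set partitions into
consecutive cyclic intervals (the interval with index `m` starting at `a m` and of
length `ℓ m ≥ 1`, the next one starting at `a m + ℓ m`) on each of which `t` is
identically `0` or of the form `±(−1, p−1, …, p−1, p)` (possibly with no `p−1`
entries). -/
theorem stmt6 {p f : ℕ} (hp : p.Prime) (hp2 : 2 < p) (hf : 1 ≤ f)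
    (t : ZMod f → ℤ) (hbound : ∀ s : ZMod f, -(p : ℤ) ≤ t s ∧ t s ≤ p)
    (hcong : ((p : ℤ) ^ f - 1) ∣
      ∑ s ∈ Finset.range f, (p : ℤ) ^ (f - 1 - s) * t (s : ZMod f)) :
    (∃ ε : ℤ, (ε = 1 ∨ ε = -1) ∧ ∀ s : ZMod f, t s = ε * ((p : ℤ) - 1)) ∨
    (∃ n : ℕ, ∃ a : Fin (n + 1) → ZMod f, ∃ ℓ : Fin (n + 1) → ℕ,
      (∀ m, 1 ≤ ℓ m) ∧ (∑ m, ℓ m = f) ∧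
      (∀ m : Fin (n + 1), a (m + 1) = a m + (ℓ m : ZMod f)) ∧
      (∀ m : Fin (n + 1),
        (∀ j : ℕ, j < ℓ m → t (a m + (j : ZMod f)) = 0) ∨
        (2 ≤ ℓ m ∧ ∃ ε : ℤ, (ε = 1 ∨ ε = -1) ∧
          t (a m) = -ε ∧
          t (a m + ((ℓ m - 1 : ℕ) : ZMod f)) = ε * p ∧
          (∀ j : ℕ, 0 < j → j < ℓ m - 1 →
            t (a m + (j : ZMod f)) = ε * ((p : ℤ) - 1))))) := by
  haveI : NeZero f := ⟨by omega⟩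
  have hP3 : (3 : ℤ) ≤ (p : ℤ) := by exact_mod_cast hp2
  set P : ℤ := (p : ℤ) with hPdef
  set D : ℤ := P ^ f - 1 with hDdef
  set G : ℤ := ∑ j ∈ range f, P ^ j with hGdef
  have hG1 : 1 ≤ G := by
    rw [hGdef]
    calc (1 : ℤ) = ∑ j ∈ range 1, P ^ j := by simp
    _ ≤ ∑ j ∈ range f, P ^ j := by
        apply Finset.sum_le_sum_of_subset_of_nonneg
        · exact Finset.range_subset_range.mpr hf
        · intro i _ _; positivity
  have hGD : G * (P - 1) = D := geom_sum_mul P f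
  have hDpos : 0 < D := by nlinarith
  set S : ZMod f → ℤ := fun a => ∑ s ∈ range f, P ^ (f - 1 - s) * t (a + (s : ZMod f))
    with hSdef
  have hSbound : ∀ a, |S a| < 2 * D := by
    intro a
    have h1 : |S a| ≤ ∑ s ∈ range f, P ^ (f - 1 - s) * P := by
      calc |S a| ≤ ∑ s ∈ range f, |P ^ (f - 1 - s) * t (a + (s : ZMod f))| :=
            Finset.abs_sum_le_sum_abs _ _
      _ ≤ ∑ s ∈ range f, P ^ (f - 1 - s) * P := by
          apply Finset.sum_le_sum
          intro s _
          rw [abs_mul, abs_pow, abs_of_nonneg (by positivity : (0:ℤ) ≤ P)]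
          apply mul_le_mul_of_nonneg_left _ (by positivity)
          rw [abs_le]
          exact ⟨(hbound _).1, (hbound _).2⟩
    have h2 : ∑ s ∈ range f, P ^ (f - 1 - s) * P = G * P := by
      rw [← Finset.sum_mul, hGdef]
      congr 1
      exact Finset.sum_range_reflect (fun j => P ^ j) f
    rw [h2] at h1
    nlinarith
  have hrec : ∀ a : ZMod f, S (a + 1) = P * S a - D * t a := by
    intro a
    obtain ⟨g, rfl⟩ : ∃ g, f = g + 1 := ⟨f - 1, by omega⟩
    have hPS : P * S a
        = (∑ s ∈ range g, P ^ (g - s) * t (a + ((s + 1 : ℕ) : ZMod (g + 1))))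
          + P ^ (g + 1) * t a := by
      rw [hSdef, Finset.mul_sum, Finset.sum_range_succ']
      congr 1
      · apply Finset.sum_congr rfl
        intro s hs
        simp only [mem_range] at hs
        rw [← mul_assoc, ← pow_succ', show g + 1 - 1 - (s + 1) + 1 = g - s from by omega]
      · rw [← mul_assoc, ← pow_succ', show g + 1 - 1 - 0 + 1 = g + 1 from by omega]
        norm_num
    have hS1 : S (a + 1) = (∑ s ∈ range g, P ^ (g - s) * t (a + ((s + 1 : ℕ) : ZMod (g + 1))))
        + t a := by
      rw [hSdef]
      beta_reduce
      rw [Finset.sum_range_succ]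
      congr 1
      · apply Finset.sum_congr rfl
        intro s hs
        simp only [mem_range] at hs
        rw [show g + 1 - 1 - s = g - s from by omega,
          show a + 1 + ((s : ℕ) : ZMod (g + 1)) = a + ((s : ℕ) : ZMod (g + 1)) + 1 from
            add_right_comm a 1 _, cast_step]
      · rw [show g + 1 - 1 - g = 0 from by omega, pow_zero, one_mul,
          show a + 1 + ((g : ℕ) : ZMod (g + 1)) = a + ((g : ℕ) : ZMod (g + 1)) + 1 from
            add_right_comm a 1 _, cast_step,
          show ((g + 1 : ℕ) : ZMod (g + 1)) = 0 from ZMod.natCast_self _, add_zero]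
    rw [hS1, hDdef, hPS]
    ring
  have hdvdNat : ∀ k : ℕ, D ∣ S ((k : ℕ) : ZMod f) := by
    intro k
    induction k with
    | zero =>
      have : S ((0 : ℕ) : ZMod f) = ∑ s ∈ range f, P ^ (f - 1 - s) * t ((s : ZMod f)) := by
        rw [hSdef]
        apply Finset.sum_congr rfl
        intro s _
        simp
      rw [this]
      exact hcong
    | succ k ih =>
      have : ((k + 1 : ℕ) : ZMod f) = ((k : ℕ) : ZMod f) + 1 := by push_cast; ring
      rw [this, hrec]
      exact dvd_sub (Dvd.dvd.mul_left ih P) (Dvd.dvd.mul_right dvd_rfl _)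
  have hdvd : ∀ a : ZMod f, D ∣ S a := by
    intro a
    have := hdvdNat a.val
    rwa [ZMod.natCast_rightInverse a] at this
  set σ : ZMod f → ℤ := fun a => S a / D with hσdef
  have hSσ : ∀ a, S a = σ a * D := by
    intro a
    rw [hσdef]
    exact (Int.ediv_mul_cancel (hdvd a)).symm
  have hσrange : ∀ a, σ a = 0 ∨ σ a = 1 ∨ σ a = -1 := by
    intro a
    have h := hSbound a
    rw [hSσ a, abs_mul, abs_of_pos hDpos] at h
    have : |σ a| < 2 := by
      by_contra hcon
      push_neg at hcon
      nlinarith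
    rw [abs_lt] at this
    omega
  have ht : ∀ a, t a = P * σ a - σ (a + 1) := by
    intro a
    have h := hrec a
    rw [hSσ, hSσ] at h
    have h2 : σ (a + 1) * D = (P * σ a - t a) * D := by ring_nf; ring_nf at h; linarith
    have := mul_right_cancel₀ (ne_of_gt hDpos) h2
    linarith
  have hnj : ∀ a, σ a ≠ 0 → σ (a + 1) = 0 ∨ σ (a + 1) = σ a := by
    intro a ha
    rcases hσrange a with h | h | h
    · exact absurd h ha
    · rcases hσrange (a + 1) with h' | h' | h'
      · exact Or.inl h'
      · exact Or.inr (by rw [h, h'])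
      · exfalso
        have hb := (hbound a).2
        rw [ht a, h, h'] at hb
        linarith
    · rcases hσrange (a + 1) with h' | h' | h'
      · exact Or.inl h'
      · exfalso
        have hb := (hbound a).1
        rw [ht a, h, h'] at hb
        linarith
      · exact Or.inr (by rw [h, h'])
  by_cases h0 : ∃ a₀, σ a₀ = 0
  · right
    obtain ⟨a₀, ha₀⟩ := h0
    have hend : σ (a₀ + ((f : ℕ) : ZMod f)) = 0 := by
      rw [ZMod.natCast_self, add_zero]
      exact ha₀
    obtain ⟨L, hLsum, hLgood⟩ := buildList p t σ hσrange hnj ht f a₀ ha₀ hend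
    obtain ⟨hall, hget⟩ := goodList_get p t L a₀ hLgood
    have hLne : L ≠ [] := by
      intro h
      rw [h] at hLsum
      simp at hLsum
      omega
    obtain ⟨n, hn⟩ : ∃ n, L.length = n + 1 :=
      ⟨L.length - 1, by
        have := List.length_pos_iff.mpr hLne
        omega⟩
    refine ⟨n, fun m => a₀ + (((L.take m.val).sum : ℕ) : ZMod f),
      fun m => L[m.val]'(by omega), ?_, ?_, ?_, ?_⟩
    · intro m
      exact hall _ (List.getElem_mem _)
    · refine Eq.trans ?_ hLsum
      refine Eq.trans ?_ (Fin.sum_univ_getElem L)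
      exact Fintype.sum_equiv (finCongr hn.symm) _ _ (fun m => rfl)
    · intro m
      beta_reduce
      rcases eq_or_ne m (Fin.last n) with rfl | hne
      · have hv : ((Fin.last n) + 1).val = 0 := by simp
        have hlast : (Fin.last n).val = n := rfl
        rw [hv]
        simp only [List.take_zero, List.sum_nil, Nat.cast_zero, add_zero]
        simp only [Fin.val_last]
        rw [add_assoc, ← Nat.cast_add, ← List.sum_take_succ L n (by omega),
          show n + 1 = L.length from hn.symm, List.take_length, hLsum, ZMod.natCast_self,
          add_zero]
      · have hv : (m + 1).val = m.val + 1 := by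
          rw [Fin.val_add_one]
          simp [hne]
        rw [hv, add_assoc, ← Nat.cast_add, ← List.sum_take_succ L m.val (by omega)]
    · intro m
      exact hget m.val (by omega)
  · left
    push_neg at h0
    have hconst : ∀ k : ℕ, σ ((k : ℕ) : ZMod f) = σ 0 := by
      intro k
      induction k with
      | zero => simp
      | succ k ih =>
        have hstep := hnj ((k : ℕ) : ZMod f) (h0 _)
        rcases hstep with h | h
        · exact absurd h (h0 _)
        · rw [show ((k + 1 : ℕ) : ZMod f) = ((k : ℕ) : ZMod f) + 1 from by push_cast; ring, h, ih]
    have hconst' : ∀ a : ZMod f, σ a = σ 0 := by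
      intro a
      have := hconst a.val
      rwa [ZMod.natCast_rightInverse a] at this
    refine ⟨σ 0, (hσrange 0).resolve_left (h0 0), ?_⟩
    intro s
    rw [ht s, hconst' s, hconst' (s + 1)]
    ring
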